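/- arXiv:2007.05089 — 5 statements merged into one kernel-verified Lean document; each statement's English description precedes it below -/
import Mathlib

section
/- Let E be a finite-dimensional real inner product space, let λ > 0, and let G : E → ℝ and g : E → ℝ be differentiable functions such that G is λ-strongly convex and there is a constant M with ‖∇g(θ)‖ ≤ M for all θ ∈ E. If θ₁ is a minimizer of G and θ₂ is a minimizer of G + g, then ‖θ₁ − θ₂‖ ≤ M / λ. -/
open scoped RealInnerProductSpace

/-- Monotonicity of the derivative of a differentiable convex function, stated via `fderiv`. -/
lemma fderiv_monotone_of_convex
    {E : Type*} [NormedAddCommGroup E] [InnerProductSpace ℝ E]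
    (f : E → ℝ) (hf : Differentiable ℝ f) (hc : ConvexOn ℝ Set.univ f) (u v : E) :
    fderiv ℝ f v (u - v) ≤ fderiv ℝ f u (u - v) := by
  set A : ℝ → E := fun t => t • (u - v) + v with hA
  have hAd : ∀ t : ℝ, HasDerivAt A (u - v) t := by
    intro t
    simpa [A] using ((hasDerivAt_id t).smul_const (u - v)).add_const v
  have hφd : ∀ t : ℝ, HasDerivAt (f ∘ A) (fderiv ℝ f (A t) (u - v)) t := by
    intro t
    exact (hf (A t)).hasFDerivAt.comp_hasDerivAt t (hAd t)
  have hconv : ConvexOn ℝ Set.univ (f ∘ A) := by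
    have := hc.comp_affineMap (AffineMap.lineMap v u : ℝ →ᵃ[ℝ] E)
    have heq : (f ∘ (AffineMap.lineMap v u : ℝ →ᵃ[ℝ] E)) = f ∘ A := by
      funext t
      simp [A, AffineMap.lineMap_apply, Function.comp]
    have hpre : (AffineMap.lineMap v u : ℝ →ᵃ[ℝ] E) ⁻¹' Set.univ = Set.univ := by
      simp
    rw [hpre, heq] at this
    exact this
  have hmono := hconv.monotoneOn_deriv (fun x _ => (hφd x).differentiableAt)
  have h01 := hmono (Set.mem_univ (0 : ℝ)) (Set.mem_univ (1 : ℝ)) zero_le_one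
  rw [(hφd 0).deriv, (hφd 1).deriv] at h01
  simpa [A] using h01

/-- If `G` is `λ`-strongly convex (i.e. `θ ↦ G θ - (λ/2)‖θ‖²` is convex),
`g` has gradient bounded by `M`, `θ₁` minimizes `G`, and `θ₂` minimizes `G + g`, then
`‖θ₁ - θ₂‖ ≤ M / λ`. -/
theorem model_sensitivity_bound
    {E : Type*} [NormedAddCommGroup E] [InnerProductSpace ℝ E] [FiniteDimensional ℝ E]
    (lam : ℝ) (hlam : 0 < lam)
    (G g : E → ℝ) (hG : Differentiable ℝ G) (hg : Differentiable ℝ g)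
    (hGsc : ConvexOn ℝ Set.univ (fun θ => G θ - lam / 2 * ‖θ‖ ^ 2))
    (M : ℝ) (hM : ∀ θ, ‖gradient g θ‖ ≤ M)
    (θ₁ θ₂ : E)
    (hθ₁ : ∀ θ, G θ₁ ≤ G θ)
    (hθ₂ : ∀ θ, G θ₂ + g θ₂ ≤ G θ + g θ) :
    ‖θ₁ - θ₂‖ ≤ M / lam := by
  classical
  -- the quadratic part
  have hq : Differentiable ℝ (fun θ : E => lam / 2 * ‖θ‖ ^ 2) := by
    have : Differentiable ℝ (fun θ : E => ‖θ‖ ^ 2) := by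
      have := (contDiff_norm_sq (𝕜 := ℝ) (E := E) (n := 1))
      exact this.differentiable one_ne_zero
    exact this.const_mul _
  have hqf : ∀ (x y : E), fderiv ℝ (fun θ : E => lam / 2 * ‖θ‖ ^ 2) x y
      = lam * ⟪x, y⟫ := by
    intro x y
    have h1 : (fun θ : E => lam / 2 * ‖θ‖ ^ 2) = fun θ : E => lam / 2 * ⟪θ, θ⟫ := by
      funext θ; rw [real_inner_self_eq_norm_sq]
    rw [h1]
    have h2 : DifferentiableAt ℝ (fun θ : E => ⟪θ, θ⟫) x :=
      (differentiableAt_id).inner ℝ (differentiableAt_id)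
    rw [fderiv_const_mul h2, ContinuousLinearMap.smul_apply]
    have h3 := fderiv_inner_apply ℝ (f := fun θ : E => θ) (g := fun θ : E => θ)
      (x := x) differentiableAt_id differentiableAt_id y
    simp only [fderiv_id', ContinuousLinearMap.coe_id', id] at h3
    rw [h3]
    rw [real_inner_comm y x]
    rw [smul_eq_mul]
    ring
  -- strong monotonicity of the gradient of `G`
  have hGd : Differentiable ℝ (fun θ : E => G θ - lam / 2 * ‖θ‖ ^ 2) := hG.sub hq
  have hmono := fderiv_monotone_of_convex _ hGd hGsc θ₁ θ₂
  have hfd : ∀ x : E, fderiv ℝ (fun θ : E => G θ - lam / 2 * ‖θ‖ ^ 2) x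
      = fderiv ℝ G x - fderiv ℝ (fun θ : E => lam / 2 * ‖θ‖ ^ 2) x :=
    fun x => fderiv_sub (hG x) (hq x)
  rw [hfd θ₁, hfd θ₂] at hmono
  simp only [ContinuousLinearMap.sub_apply, hqf] at hmono
  -- first-order conditions
  have hG1 : fderiv ℝ G θ₁ = 0 := by
    have : IsLocalMin G θ₁ := Filter.Eventually.of_forall hθ₁
    exact this.fderiv_eq_zero
  have hG2 : fderiv ℝ (fun θ => G θ + g θ) θ₂ = 0 := by
    have : IsLocalMin (fun θ => G θ + g θ) θ₂ := Filter.Eventually.of_forall hθ₂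
    exact this.fderiv_eq_zero
  have hG2' : fderiv ℝ G θ₂ + fderiv ℝ g θ₂ = 0 := by
    rw [← fderiv_add (hG θ₂) (hg θ₂)]; exact hG2
  -- combine
  set r := ‖θ₁ - θ₂‖ with hr
  have key : lam * r ^ 2 ≤ fderiv ℝ g θ₂ (θ₁ - θ₂) := by
    have e1 : fderiv ℝ G θ₁ (θ₁ - θ₂) = 0 := by rw [hG1]; simp
    have e2 : fderiv ℝ G θ₂ (θ₁ - θ₂) = -(fderiv ℝ g θ₂ (θ₁ - θ₂)) := by
      have : fderiv ℝ G θ₂ = -(fderiv ℝ g θ₂) :=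
        eq_neg_of_add_eq_zero_left hG2'
      rw [this]; simp
    have e3 : ⟪θ₁ - θ₂, θ₁ - θ₂⟫ = r ^ 2 := by
      rw [real_inner_self_eq_norm_sq]
    rw [e1, e2] at hmono
    -- hmono : -(fderiv g θ₂ (θ₁-θ₂)) - lam * ⟪θ₂, θ₁-θ₂⟫ ≤ 0 - lam * ⟪θ₁, θ₁-θ₂⟫
    have : lam * ⟪θ₁ - θ₂, θ₁ - θ₂⟫ ≤ fderiv ℝ g θ₂ (θ₁ - θ₂) := by
      have := hmono
      rw [inner_sub_left (𝕜 := ℝ)]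
      linarith
    rwa [e3] at this
  have hfg : fderiv ℝ g θ₂ (θ₁ - θ₂) ≤ M * r := by
    have h1 : fderiv ℝ g θ₂ (θ₁ - θ₂) = ⟪gradient g θ₂, θ₁ - θ₂⟫ := by
      rw [gradient, InnerProductSpace.toDual_symm_apply]
    rw [h1]
    calc ⟪gradient g θ₂, θ₁ - θ₂⟫ ≤ ‖gradient g θ₂‖ * ‖θ₁ - θ₂‖ := real_inner_le_norm _ _
      _ ≤ M * r := by
          exact mul_le_mul_of_nonneg_right (hM θ₂) (norm_nonneg _)
  have hM0 : 0 ≤ M := le_trans (norm_nonneg _) (hM θ₂)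
  rcases eq_or_lt_of_le (norm_nonneg (θ₁ - θ₂)) with h0 | h0
  · have hre : r = 0 := h0.symm
    rw [hre]
    positivity
  · have hlr : lam * r ^ 2 ≤ M * r := le_trans key hfg
    have : lam * r ≤ M := by nlinarith
    rw [le_div_iff₀ hlam]
    linarith [this]
end

section
/- Let N ≥ 1 and K ≥ 0, let h₁, h₂ : ℝ^C → ℝ be differentiable functions whose gradients satisfy ‖∇h₁(a)‖₂ ≤ K and ‖∇h₂(a)‖₂ ≤ K for all a, and let x, x′ ∈ ℝ^D with ‖x‖₂ ≤ 1 and ‖x′‖₂ ≤ 1. Define g : ℝ^{D×C} → ℝ by g(θ) = (1/N)·(h₁(θᵀx) − h₂(θᵀx′)). Then g is differentiable and its gradient (a D×C matrix) satisfies ‖∇g(θ)‖_F ≤ 2K/N for every θ, where ‖·‖_F denotes the Frobenius norm. -/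
/-- The matrix–vector product `θᵀ x ∈ ℝ^C`, where `θ ∈ ℝ^{D×C}` is viewed as an element of
the Euclidean space indexed by `Fin D × Fin C` (so its Euclidean norm is the Frobenius norm). -/
noncomputable def matVecT {D C : ℕ} (θ : EuclideanSpace ℝ (Fin D × Fin C))
    (x : EuclideanSpace ℝ (Fin D)) : EuclideanSpace ℝ (Fin C) :=
  WithLp.toLp 2 (fun c => ∑ d, θ (d, c) * x d)

lemma matVecT_norm_le {D C : ℕ} (θ : EuclideanSpace ℝ (Fin D × Fin C))
    (x : EuclideanSpace ℝ (Fin D)) : ‖matVecT θ x‖ ≤ ‖x‖ * ‖θ‖ := by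
  have hx2 : ‖x‖ ^ 2 = ∑ d, (x d) ^ 2 := by
    rw [EuclideanSpace.norm_eq, Real.sq_sqrt (by positivity)]
    simp [sq_abs]
  have hθ2 : ‖θ‖ ^ 2 = ∑ c, ∑ d, (θ (d, c)) ^ 2 := by
    rw [EuclideanSpace.norm_eq, Real.sq_sqrt (by positivity)]
    simp only [Real.norm_eq_abs, sq_abs]
    rw [Fintype.sum_prod_type]
    exact Finset.sum_comm
  have key : ‖matVecT θ x‖ ^ 2 ≤ (‖x‖ * ‖θ‖) ^ 2 := by
    rw [EuclideanSpace.norm_eq, Real.sq_sqrt (by positivity)]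
    simp only [Real.norm_eq_abs, sq_abs]
    calc (∑ c, (matVecT θ x c) ^ 2)
        ≤ ∑ c, (∑ d, (θ (d, c)) ^ 2) * ∑ d, (x d) ^ 2 := by
          refine Finset.sum_le_sum fun c _ => ?_
          exact Finset.sum_mul_sq_le_sq_mul_sq Finset.univ (fun d => θ (d, c)) (fun d => x d)
      _ = (‖x‖ * ‖θ‖) ^ 2 := by
          rw [← Finset.sum_mul, mul_pow, ← hθ2, hx2, mul_comm]
  have h1 : 0 ≤ ‖x‖ * ‖θ‖ := by positivity
  nlinarith [norm_nonneg (matVecT θ x)]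

noncomputable def matVecTL {D C : ℕ} (x : EuclideanSpace ℝ (Fin D)) :
    EuclideanSpace ℝ (Fin D × Fin C) →L[ℝ] EuclideanSpace ℝ (Fin C) :=
  LinearMap.mkContinuous
    { toFun := fun θ => matVecT θ x
      map_add' := fun θ η => by
        ext c
        simp [matVecT, add_mul, Finset.sum_add_distrib]
      map_smul' := fun r θ => by
        ext c
        simp [matVecT, Finset.mul_sum, mul_assoc] }
    ‖x‖ (fun θ => matVecT_norm_le θ x)

lemma matVecTL_norm_le {D C : ℕ} (x : EuclideanSpace ℝ (Fin D)) :
    ‖(matVecTL x : EuclideanSpace ℝ (Fin D × Fin C) →L[ℝ] _)‖ ≤ ‖x‖ :=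
  LinearMap.mkContinuous_norm_le _ (norm_nonneg x) _

/-- if `g(θ) = (1/N)(h₁(θᵀx) - h₂(θᵀx'))` with `‖∇h₁‖, ‖∇h₂‖ ≤ K` and
`‖x‖₂, ‖x'‖₂ ≤ 1`, then `g` is differentiable with `‖∇g(θ)‖_F ≤ 2K/N` for all `θ`. -/
theorem grad_bound_difference_loss {D C : ℕ} (N : ℕ) (hN : 1 ≤ N) (K : ℝ) (hK : 0 ≤ K)
    (h₁ h₂ : EuclideanSpace ℝ (Fin C) → ℝ)
    (hd1 : Differentiable ℝ h₁) (hd2 : Differentiable ℝ h₂)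
    (hg1 : ∀ a, ‖gradient h₁ a‖ ≤ K) (hg2 : ∀ a, ‖gradient h₂ a‖ ≤ K)
    (x x' : EuclideanSpace ℝ (Fin D)) (hx : ‖x‖ ≤ 1) (hx' : ‖x'‖ ≤ 1)
    (g : EuclideanSpace ℝ (Fin D × Fin C) → ℝ)
    (hgdef : ∀ θ, g θ = (1 / (N : ℝ)) * (h₁ (matVecT θ x) - h₂ (matVecT θ x'))) :
    Differentiable ℝ g ∧ ∀ θ, ‖gradient g θ‖ ≤ 2 * K / N := by
  have hNpos : (0 : ℝ) < N := by exact_mod_cast hN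
  have hgfun : g = fun θ => (1 / (N : ℝ)) * (h₁ (matVecTL x θ) - h₂ (matVecTL x' θ)) := by
    funext θ; rw [hgdef θ]; rfl
  have hfd : ∀ θ : EuclideanSpace ℝ (Fin D × Fin C), HasFDerivAt g
      ((1 / (N : ℝ)) • (((fderiv ℝ h₁ (matVecTL x θ)).comp (matVecTL x)) -
        ((fderiv ℝ h₂ (matVecTL x' θ)).comp (matVecTL x')))) θ := by
    intro θ
    rw [hgfun]
    exact (((hd1 (matVecTL x θ)).hasFDerivAt.comp θ (matVecTL x).hasFDerivAt).sub
      ((hd2 (matVecTL x' θ)).hasFDerivAt.comp θ (matVecTL x').hasFDerivAt)).const_mul _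
  have hdiff : Differentiable ℝ g := fun θ => (hfd θ).differentiableAt
  refine ⟨hdiff, fun θ => ?_⟩
  have hnormgrad : ∀ (f : EuclideanSpace ℝ (Fin C) → ℝ) (a), ‖gradient f a‖ = ‖fderiv ℝ f a‖ :=
    fun f a => (InnerProductSpace.toDual ℝ _).symm.norm_map _
  have hgg : ‖gradient g θ‖ = ‖fderiv ℝ g θ‖ :=
    (InnerProductSpace.toDual ℝ _).symm.norm_map _
  rw [hgg, (hfd θ).fderiv]
  have b1 : ‖fderiv ℝ h₁ (matVecTL x θ)‖ ≤ K := by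
    rw [← hnormgrad]; exact hg1 _
  have b2 : ‖fderiv ℝ h₂ (matVecTL x' θ)‖ ≤ K := by
    rw [← hnormgrad]; exact hg2 _
  calc ‖(1 / (N : ℝ)) • (((fderiv ℝ h₁ (matVecTL x θ)).comp (matVecTL x)) -
        ((fderiv ℝ h₂ (matVecTL x' θ)).comp (matVecTL x')))‖
      ≤ (1 / (N : ℝ)) * (‖(fderiv ℝ h₁ (matVecTL x θ)).comp (matVecTL x)‖ +
          ‖(fderiv ℝ h₂ (matVecTL x' θ)).comp (matVecTL x')‖) := by
        refine le_trans (ContinuousLinearMap.opNorm_smul_le _ _) ?_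
        rw [Real.norm_eq_abs, abs_of_pos (by positivity)]
        gcongr
        exact norm_sub_le _ _
    _ ≤ (1 / (N : ℝ)) * (K * 1 + K * 1) := by
        gcongr
        · exact le_trans (ContinuousLinearMap.opNorm_comp_le _ _)
            (mul_le_mul b1 (le_trans (matVecTL_norm_le x) hx) (norm_nonneg _) hK)
        · exact le_trans (ContinuousLinearMap.opNorm_comp_le _ _)
            (mul_le_mul b2 (le_trans (matVecTL_norm_le x') hx') (norm_nonneg _) hK)
    _ = 2 * K / N := by ring
end

section
/- Let A and E be real symmetric n×n matrices with A positive definite and E positive semidefinite, and suppose rank(E) ≤ C. Let m ≥ 0 be any constant such that m·A − E is positive semidefinite (equivalently, m ≥ λ_max(A⁻¹E)). Then det(A + E) ≤ det(A) · (1 + m)^C. -/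
open Matrix Finset
open scoped MatrixOrder

/-- Auxiliary: eigenvalue upper bound from `m•1 - F` positive semidefinite. -/
lemma aux_eigenvalue_le {n : ℕ} {F : Matrix (Fin n) (Fin n) ℝ} (m : ℝ)
    (hF : F.IsHermitian) (hmF : (m • (1 : Matrix (Fin n) (Fin n) ℝ) - F).PosSemidef) (i : Fin n) :
    hF.eigenvalues i ≤ m := by
  set v : Fin n → ℝ := ⇑(hF.eigenvectorBasis i) with hv
  have hvv : v ⬝ᵥ v = 1 := by
    have h1 : ‖hF.eigenvectorBasis i‖ = 1 := hF.eigenvectorBasis.orthonormal.1 i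
    have h2 : (inner ℝ (hF.eigenvectorBasis i) (hF.eigenvectorBasis i) : ℝ) = 1 := by
      rw [real_inner_self_eq_norm_sq, h1]; norm_num
    rw [← h2, EuclideanSpace.inner_eq_star_dotProduct, star_trivial]
  have hmul : F *ᵥ v = hF.eigenvalues i • v := hF.mulVec_eigenvectorBasis i
  have hpos := hmF.dotProduct_mulVec_nonneg v
  simp only [sub_mulVec, smul_mulVec, one_mulVec, hmul, dotProduct_sub,
    dotProduct_smul, star_trivial, smul_eq_mul, hvv, mul_one, RCLike.re_to_real] at hpos
  linarith

/-- Auxiliary: determinant of `1 + F` for a hermitian real matrix `F`. -/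
lemma aux_det_one_add {n : ℕ} {F : Matrix (Fin n) (Fin n) ℝ} (hF : F.IsHermitian) :
    (1 + F).det = ∏ i, (1 + hF.eigenvalues i) := by
  set U : Matrix (Fin n) (Fin n) ℝ := (hF.eigenvectorUnitary : Matrix (Fin n) (Fin n) ℝ)
  have hU : U * star U = 1 := (Matrix.mem_unitaryGroup_iff).mp hF.eigenvectorUnitary.2
  have h1 : (1 : Matrix (Fin n) (Fin n) ℝ) + F
      = U * diagonal (fun i => 1 + hF.eigenvalues i) * star U := by
    conv_lhs => rw [hF.spectral_theorem, Unitary.conjStarAlgAut_apply, ← hU]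
    have h2 : diagonal (fun i => 1 + hF.eigenvalues i)
        = 1 + diagonal (RCLike.ofReal ∘ hF.eigenvalues) := by
      rw [← Matrix.diagonal_one, diagonal_add]
      rfl
    rw [h2, Matrix.mul_add, Matrix.add_mul, Matrix.mul_one]
  rw [h1, det_mul_right_comm, hU, Matrix.one_mul, det_diagonal]

/-- Lemma 2 of the paper: for symmetric matrices with `A` positive definite,
`E` positive semidefinite of rank at most `C`, and `m·A - E` positive semidefinite
(i.e. `m ≥ λ_max(A⁻¹E)`), we have `det(A + E) ≤ det(A)·(1 + m)^C`. -/
theorem det_add_le_det_mul_pow {n : ℕ} (C : ℕ) (A E : Matrix (Fin n) (Fin n) ℝ)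
    (hA : A.PosDef) (hE : E.PosSemidef) (hrank : E.rank ≤ C)
    (m : ℝ) (hm : 0 ≤ m) (hmA : (m • A - E).PosSemidef) :
    (A + E).det ≤ A.det * (1 + m) ^ C := by
  set S := CFC.sqrt A with hSdef
  have hS : S.PosSemidef := Matrix.nonneg_iff_posSemidef.mp (CFC.sqrt_nonneg A)
  have hSS : S * S = A := CFC.sqrt_mul_sqrt_self A (Matrix.nonneg_iff_posSemidef.mpr hA.posSemidef)
  have hdetA : 0 < A.det := hA.det_pos
  have hdetS : IsUnit S.det := by
    apply isUnit_iff_ne_zero.mpr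
    intro h
    rw [← hSS, det_mul, h, mul_zero] at hdetA
    exact lt_irrefl 0 hdetA
  have hdetSinv : IsUnit (S⁻¹).det := by
    rw [det_nonsing_inv, Ring.inverse_eq_inv']
    exact isUnit_iff_ne_zero.mpr (inv_ne_zero hdetS.ne_zero)
  have hSinv : S * S⁻¹ = 1 := mul_nonsing_inv S hdetS
  have hinvS : S⁻¹ * S = 1 := nonsing_inv_mul S hdetS
  have hSinvH : (S⁻¹)ᴴ = S⁻¹ := (hS.1.inv).eq
  set F := S⁻¹ * E * S⁻¹ with hFdef
  -- F is positive semidefinite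
  have hF : F.PosSemidef := by
    have := hE.mul_mul_conjTranspose_same S⁻¹
    rwa [hSinvH] at this
  -- m•1 - F is positive semidefinite
  have hmF : (m • (1 : Matrix (Fin n) (Fin n) ℝ) - F).PosSemidef := by
    have heq : m • (1 : Matrix (Fin n) (Fin n) ℝ) - F = S⁻¹ * (m • A - E) * S⁻¹ := by
      rw [Matrix.mul_sub, Matrix.sub_mul, hFdef, Matrix.mul_smul, Matrix.smul_mul, ← hSS,
        ← Matrix.mul_assoc, hinvS, Matrix.one_mul, hSinv]
    rw [heq]
    have := hmA.mul_mul_conjTranspose_same S⁻¹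
    rwa [hSinvH] at this
  -- eigenvalues of F
  set μ : Fin n → ℝ := hF.1.eigenvalues with hμdef
  have hμ0 : ∀ i, 0 ≤ μ i := hF.eigenvalues_nonneg
  have hμm : ∀ i, μ i ≤ m := fun i => aux_eigenvalue_le m hF.1 hmF i
  -- decomposition of A + E and its determinant
  have hdecomp : A + E = S * (1 + F) * S := by
    rw [Matrix.mul_add, Matrix.add_mul, Matrix.mul_one, hSS, hFdef,
      ← Matrix.mul_assoc, ← Matrix.mul_assoc, hSinv, Matrix.one_mul, Matrix.mul_assoc, hinvS,
      Matrix.mul_one]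
  have hdet : (A + E).det = A.det * (1 + F).det := by
    rw [hdecomp, det_mul, det_mul, ← hSS, det_mul]
    ring
  -- rank of F
  have hrankF : F.rank ≤ C := by
    rw [hFdef, rank_mul_eq_left_of_isUnit_det S⁻¹ (S⁻¹ * E) hdetSinv,
      rank_mul_eq_right_of_isUnit_det S⁻¹ E hdetSinv]
    exact hrank
  -- determinant of 1 + F
  have hdet1F : (1 + F).det = ∏ i, (1 + μ i) := aux_det_one_add hF.1
  -- bound the product
  have hcard : (Finset.univ.filter fun i => μ i ≠ 0).card ≤ C := by
    have := hF.1.rank_eq_card_non_zero_eigs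
    rw [Fintype.card_subtype] at this
    rw [← this]
    exact hrankF
  have hprod : ∏ i, (1 + μ i) ≤ (1 + m) ^ C := by
    rw [← Finset.prod_filter_mul_prod_filter_not Finset.univ (fun i => μ i ≠ 0)]
    have h2 : ∏ i ∈ Finset.univ.filter (fun i => ¬ μ i ≠ 0), (1 + μ i) = 1 := by
      apply Finset.prod_eq_one
      intro i hi
      simp only [Finset.mem_filter, not_not] at hi
      rw [hi.2, add_zero]
    rw [h2, mul_one]
    calc ∏ i ∈ Finset.univ.filter (fun i => μ i ≠ 0), (1 + μ i)
        ≤ ∏ _i ∈ Finset.univ.filter (fun i => μ i ≠ 0), (1 + m) := by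
          apply Finset.prod_le_prod
          · intro i _; linarith [hμ0 i]
          · intro i _; linarith [hμm i]
      _ = (1 + m) ^ (Finset.univ.filter fun i => μ i ≠ 0).card := by
          rw [Finset.prod_const]
      _ ≤ (1 + m) ^ C := by
          apply pow_le_pow_right₀ (by linarith) hcard
  rw [hdet, hdet1F]
  exact mul_le_mul_of_nonneg_left hprod (le_of_lt hdetA)
end

section
/- Let ρ > 0 and L ≥ 0, and let A and E be real symmetric n×n matrices such that A − ρ·I is positive semidefinite, E is positive semidefinite with all eigenvalues at most L, and rank(E) ≤ C. Then A is invertible and det(A + E) ≤ det(A) · (1 + L/ρ)^C. -/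
open Matrix Finset
open scoped MatrixOrder

lemma my_unit_dot {n : ℕ} {M : Matrix (Fin n) (Fin n) ℝ} (hM : M.IsHermitian) (i : Fin n) :
    star ⇑(hM.eigenvectorBasis i) ⬝ᵥ ⇑(hM.eigenvectorBasis i) = 1 := by
  have h := hM.eigenvectorBasis.orthonormal.1 i
  have : (inner ℝ (hM.eigenvectorBasis i) (hM.eigenvectorBasis i) : ℝ) = 1 := by
    rw [real_inner_self_eq_norm_sq, h]; norm_num
  rw [← this, EuclideanSpace.inner_eq_star_dotProduct, dotProduct_comm]

lemma my_eig_le {n : ℕ} {M : Matrix (Fin n) (Fin n) ℝ} (hM : M.IsHermitian) {c : ℝ}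
    (h : (c • (1 : Matrix (Fin n) (Fin n) ℝ) - M).PosSemidef) (i : Fin n) :
    hM.eigenvalues i ≤ c := by
  have hv := hM.mulVec_eigenvectorBasis i
  set v : Fin n → ℝ := ⇑(hM.eigenvectorBasis i) with hvdef
  have hd : star v ⬝ᵥ v = 1 := my_unit_dot hM i
  have h2 := h.dotProduct_mulVec_nonneg v
  rw [sub_mulVec, smul_mulVec, one_mulVec, hv, dotProduct_sub, dotProduct_smul,
    dotProduct_smul, hd, smul_eq_mul, smul_eq_mul] at h2
  linarith

lemma my_smul_psd {n : ℕ} {B : Matrix (Fin n) (Fin n) ℝ} (hB : B.PosSemidef) {c : ℝ}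
    (hc : 0 ≤ c) : (c • B).PosSemidef := by
  refine .of_dotProduct_mulVec_nonneg ?_ (fun x => ?_)
  · unfold Matrix.IsHermitian
    rw [conjTranspose_smul, hB.1]; simp
  · rw [smul_mulVec, dotProduct_smul, smul_eq_mul]
    exact mul_nonneg hc (hB.dotProduct_mulVec_nonneg x)

/-- if `A - ρ·I` is positive semidefinite (so the eigenvalues of `A` are at
least `ρ > 0`), and `E` is positive semidefinite with eigenvalues at most `L` and rank at
most `C`, then `A` is invertible and `det(A + E) ≤ det(A)·(1 + L/ρ)^C`. -/
theorem det_add_le_det_mul_pow_of_eig_bounds {n : ℕ} (C : ℕ) (ρ L : ℝ)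
    (hρ : 0 < ρ) (hL : 0 ≤ L)
    (A E : Matrix (Fin n) (Fin n) ℝ)
    (hAsymm : A.IsSymm) (hEsymm : E.IsSymm)
    (hA : (A - ρ • (1 : Matrix (Fin n) (Fin n) ℝ)).PosSemidef)
    (hE : E.PosSemidef)
    (hEL : (L • (1 : Matrix (Fin n) (Fin n) ℝ) - E).PosSemidef)
    (hrank : E.rank ≤ C) :
    IsUnit A ∧ (A + E).det ≤ A.det * (1 + L / ρ) ^ C := by
  have hρ1 : ((ρ : ℝ) • (1 : Matrix (Fin n) (Fin n) ℝ)).PosDef := by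
    refine .of_dotProduct_mulVec_pos ?_ (fun x hx => ?_)
    · unfold Matrix.IsHermitian
      rw [conjTranspose_smul, conjTranspose_one]; simp
    · rw [smul_mulVec, one_mulVec, dotProduct_smul, smul_eq_mul]
      have h0 : 0 ≤ star x ⬝ᵥ x := dotProduct_star_self_nonneg x
      have hne : star x ⬝ᵥ x ≠ 0 := fun h => hx (dotProduct_star_self_eq_zero.mp h)
      exact mul_pos hρ (lt_of_le_of_ne h0 (Ne.symm hne))
  have hApd : A.PosDef := by
    have := Matrix.PosDef.posSemidef_add hA hρ1
    rwa [sub_add_cancel] at this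
  refine ⟨hApd.isUnit, ?_⟩
  set S := CFC.sqrt A with hSdef
  have hS : S.PosSemidef := (CFC.sqrt_nonneg A).posSemidef
  have hSS : S * S = A := CFC.sqrt_mul_sqrt_self A hApd.posSemidef.nonneg
  have hdetS : IsUnit S.det := by
    have h1 : S.det * S.det = A.det := by rw [← det_mul, hSS]
    have : S.det ≠ 0 := by
      intro h; rw [h, mul_zero] at h1; exact hApd.det_pos.ne' h1.symm
    exact this.isUnit
  have hSinv : S * S⁻¹ = 1 := mul_nonsing_inv _ hdetS
  have hSinv' : S⁻¹ * S = 1 := nonsing_inv_mul _ hdetS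
  have hSinvH : (S⁻¹)ᴴ = S⁻¹ := by rw [conjTranspose_nonsing_inv, hS.1]
  set M := S⁻¹ * E * S⁻¹ with hMdef
  have hM : M.PosSemidef := by
    have := hE.conjTranspose_mul_mul_same S⁻¹
    rwa [hSinvH] at this
  have hdetSinv : IsUnit (S⁻¹).det := isUnit_nonsing_inv_det S hdetS
  -- rank of M
  have hMrank : M.rank ≤ C := by
    rw [hMdef, rank_mul_eq_left_of_isUnit_det _ _ hdetSinv,
      rank_mul_eq_right_of_isUnit_det _ _ hdetSinv]
    exact hrank
  -- eigenvalue upper bound for M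
  have hMle : ((L / ρ) • (1 : Matrix (Fin n) (Fin n) ℝ) - M).PosSemidef := by
    have key : (L / ρ) • (1 : Matrix (Fin n) (Fin n) ℝ) - M
        = (S⁻¹)ᴴ * ((L / ρ) • A - E) * S⁻¹ := by
      rw [hSinvH, hMdef]
      have h1 : S⁻¹ * ((L / ρ) • A - E) * S⁻¹
          = (L / ρ) • (S⁻¹ * A * S⁻¹) - S⁻¹ * E * S⁻¹ := by
        rw [Matrix.mul_sub, Matrix.sub_mul, Matrix.mul_smul, Matrix.smul_mul]
      rw [h1, ← hSS, ← Matrix.mul_assoc, hSinv', Matrix.mul_assoc, Matrix.mul_assoc]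
      rw [hSinv, Matrix.mul_one]
    rw [key]
    have hpsd : ((L / ρ) • A - E).PosSemidef := by
      have heq : (L / ρ) • A - E
          = (L / ρ) • (A - ρ • (1 : Matrix (Fin n) (Fin n) ℝ))
            + (L • (1 : Matrix (Fin n) (Fin n) ℝ) - E) := by
        rw [smul_sub, smul_smul, div_mul_cancel₀ _ hρ.ne']
        abel
      rw [heq]
      exact (my_smul_psd hA (div_nonneg hL hρ.le)).add hEL
    exact hpsd.conjTranspose_mul_mul_same S⁻¹
  -- decompose A + E
  have hAE : A + E = S * (1 + M) * S := by
    rw [hMdef, Matrix.mul_add, Matrix.add_mul, Matrix.mul_one, hSS]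
    congr 1
    rw [← Matrix.mul_assoc, ← Matrix.mul_assoc, hSinv, Matrix.one_mul,
      Matrix.mul_assoc, hSinv', Matrix.mul_one]
  have hdet : (A + E).det = A.det * (1 + M).det := by
    rw [hAE, det_mul, det_mul, mul_comm S.det, mul_assoc, ← det_mul, hSS]
    ring
  -- det (1 + M) = ∏ (1 + μ i)
  set μ := hM.1.eigenvalues with hμdef
  have hdet1M : (1 + M).det = ∏ i, (1 + μ i) := by
    have hspec := hM.1.spectral_theorem
    set U : Matrix (Fin n) (Fin n) ℝ := (hM.1.eigenvectorUnitary : Matrix (Fin n) (Fin n) ℝ) with hUdef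
    have hUU : U * star U = 1 := Matrix.mem_unitaryGroup_iff.mp hM.1.eigenvectorUnitary.2
    have h1M : 1 + M = U * (1 + diagonal (RCLike.ofReal ∘ μ)) * star U := by
      rw [Matrix.mul_add, Matrix.add_mul, Matrix.mul_one, hUU]
      exact congrArg (1 + ·) hspec
    rw [h1M, det_mul_right_comm, hUU, Matrix.one_mul]
    have : (1 : Matrix (Fin n) (Fin n) ℝ) + diagonal (RCLike.ofReal ∘ μ)
        = diagonal (fun i => 1 + μ i) := by
      rw [← diagonal_one, diagonal_add]
      rfl
    rw [this, det_diagonal]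
  -- bound the product
  have hμ0 : ∀ i, 0 ≤ μ i := fun i => hM.eigenvalues_nonneg i
  have hμle : ∀ i, μ i ≤ L / ρ := fun i => my_eig_le hM.1 hMle i
  have hcard : (Finset.univ.filter (fun i => μ i ≠ 0)).card ≤ C := by
    have := hM.1.rank_eq_card_non_zero_eigs
    rw [Fintype.card_subtype] at this
    rw [← hμdef] at this
    omega
  have hb1 : (0:ℝ) ≤ 1 + L / ρ := by positivity
  have hprod : ∏ i, (1 + μ i) ≤ (1 + L / ρ) ^ C := by
    have e1 : ∏ i ∈ Finset.univ.filter (fun i => μ i ≠ 0), (1 + μ i) = ∏ i, (1 + μ i) :=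
      Finset.prod_filter_of_ne (fun x _ hx h0 => hx (by rw [h0, add_zero]))
    calc ∏ i, (1 + μ i)
        = ∏ i ∈ Finset.univ.filter (fun i => μ i ≠ 0), (1 + μ i) := e1.symm
      _ ≤ ∏ _i ∈ Finset.univ.filter (fun i => μ i ≠ 0), (1 + L / ρ) :=
          Finset.prod_le_prod (fun i _ => by linarith [hμ0 i]) (fun i _ => by linarith [hμle i])
      _ = (1 + L / ρ) ^ (Finset.univ.filter (fun i => μ i ≠ 0)).card := Finset.prod_const _
      _ ≤ (1 + L / ρ) ^ C := by
          apply pow_le_pow_right₀ (by linarith [div_nonneg hL hρ.le]) hcard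
  rw [hdet, hdet1M]
  exact mul_le_mul_of_nonneg_left hprod hApd.det_pos.le
end

section
/- Let E be a finite-dimensional real inner product space, λ > 0, and let G : E → ℝ be differentiable and λ-strongly convex with minimizer θ₁, and let g : E → ℝ be differentiable and convex such that G + g has minimizer θ₂. Then ∇G(θ₂) = −∇g(θ₂) and λ‖θ₁ − θ₂‖² ≤ ⟨∇G(θ₂) − ∇G(θ₁), θ₂ − θ₁⟩ = ⟨−∇g(θ₂), θ₂ − θ₁⟩ ≤ ‖∇g(θ₂)‖·‖θ₁ − θ₂‖, whence ‖θ₁ − θ₂‖ ≤ ‖∇g(θ₂)‖ / λ. -/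
open scoped RealInnerProductSpace


lemma my_inner_gradient {E : Type*} [NormedAddCommGroup E] [InnerProductSpace ℝ E]
    [CompleteSpace E] (f : E → ℝ) (x v : E) :
    ⟪gradient f x, v⟫ = fderiv ℝ f x v := by
  simp [gradient, InnerProductSpace.toDual_symm_apply]

lemma my_first_order {E : Type*} [NormedAddCommGroup E] [InnerProductSpace ℝ E]
    {f : E → ℝ} (hf : Differentiable ℝ f) (hc : ConvexOn ℝ Set.univ f) (x y : E) :
    fderiv ℝ f x (y - x) ≤ f y - f x := by
  set φ : ℝ → ℝ := fun t => f (x + t • (y - x)) with hφ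
  have hcurve : ∀ t : ℝ, HasDerivAt (fun t : ℝ => x + t • (y - x)) (y - x) t := by
    intro t
    simpa using ((hasDerivAt_id t).smul_const (y - x)).const_add x
  have hder : HasDerivAt φ (fderiv ℝ f x (y - x)) 0 := by
    have := (hf (x + (0:ℝ) • (y - x))).hasFDerivAt.comp_hasDerivAt 0 (hcurve 0)
    simp only [zero_smul, add_zero] at this
    exact this
  have hφconv : ConvexOn ℝ Set.univ φ := by
    have h := hc.comp_affineMap (AffineMap.lineMap x y : ℝ →ᵃ[ℝ] E)
    have : (⇑(AffineMap.lineMap x y : ℝ →ᵃ[ℝ] E)) ⁻¹' Set.univ = Set.univ := by simp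
    rw [this] at h
    have e : φ = f ∘ ⇑(AffineMap.lineMap x y : ℝ →ᵃ[ℝ] E) := by
      funext t
      simp [φ, AffineMap.lineMap_apply, add_comm]
    rw [e]; exact h
  have := hφconv.le_slope_of_hasDerivAt (Set.mem_univ (0:ℝ)) (Set.mem_univ (1:ℝ))
    one_pos hder
  simpa [slope, φ] using this

lemma my_div_bound {lam n K : ℝ} (hlam : 0 < lam) (hn : 0 ≤ n) (hK : 0 ≤ K)
    (h : lam * n ^ 2 ≤ K * n) : n ≤ K / lam := by
  rcases eq_or_lt_of_le hn with h0 | h0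
  · rw [← h0]; positivity
  · rw [le_div_iff₀ hlam]
    nlinarith

lemma my_monotone {E : Type*} [NormedAddCommGroup E] [InnerProductSpace ℝ E]
    {f : E → ℝ} (hf : Differentiable ℝ f) (hc : ConvexOn ℝ Set.univ f) (x y : E) :
    fderiv ℝ f x (y - x) ≤ fderiv ℝ f y (y - x) := by
  have h1 := my_first_order hf hc x y
  have h2 := my_first_order hf hc y x
  have h3 : fderiv ℝ f y (x - y) = - fderiv ℝ f y (y - x) := by
    rw [← map_neg]; congr 1; abel
  linarith [h2, h3 ▸ h2]

/-- the chain of inequalities behind the sensitivity bound. With `G`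
`λ`-strongly convex minimized at `θ₁` and `G + g` minimized at `θ₂` (`g` convex), one has
`∇G(θ₂) = -∇g(θ₂)`,
`λ‖θ₁ - θ₂‖² ≤ ⟨∇G(θ₂) - ∇G(θ₁), θ₂ - θ₁⟩ = ⟨-∇g(θ₂), θ₂ - θ₁⟩ ≤ ‖∇g(θ₂)‖·‖θ₁ - θ₂‖`,
whence `‖θ₁ - θ₂‖ ≤ ‖∇g(θ₂)‖/λ`. -/
theorem strong_convexity_sensitivity_chain
    {E : Type*} [NormedAddCommGroup E] [InnerProductSpace ℝ E] [FiniteDimensional ℝ E]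
    (lam : ℝ) (hlam : 0 < lam)
    (G g : E → ℝ) (hG : Differentiable ℝ G) (hg : Differentiable ℝ g)
    (hGsc : ConvexOn ℝ Set.univ (fun θ => G θ - lam / 2 * ‖θ‖ ^ 2))
    (hgconv : ConvexOn ℝ Set.univ g)
    (θ₁ θ₂ : E)
    (hθ₁ : ∀ θ, G θ₁ ≤ G θ)
    (hθ₂ : ∀ θ, G θ₂ + g θ₂ ≤ G θ + g θ) :
    gradient G θ₂ = -gradient g θ₂ ∧
    lam * ‖θ₁ - θ₂‖ ^ 2 ≤ ⟪gradient G θ₂ - gradient G θ₁, θ₂ - θ₁⟫ ∧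
    ⟪gradient G θ₂ - gradient G θ₁, θ₂ - θ₁⟫ = ⟪-gradient g θ₂, θ₂ - θ₁⟫ ∧
    ⟪-gradient g θ₂, θ₂ - θ₁⟫ ≤ ‖gradient g θ₂‖ * ‖θ₁ - θ₂‖ ∧
    ‖θ₁ - θ₂‖ ≤ ‖gradient g θ₂‖ / lam := by
  -- the gradient of G vanishes at θ₁
  have hmin1 : IsLocalMin G θ₁ := Filter.Eventually.of_forall fun θ => hθ₁ θ
  have hfd1 : fderiv ℝ G θ₁ = 0 := hmin1.fderiv_eq_zero
  have hgrad1 : gradient G θ₁ = 0 := by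
    simp [gradient, hfd1]
  -- the gradient of G + g vanishes at θ₂
  have hmin2 : IsLocalMin (fun θ => G θ + g θ) θ₂ := Filter.Eventually.of_forall fun θ => hθ₂ θ
  have hfd2 : fderiv ℝ (fun θ => G θ + g θ) θ₂ = 0 := hmin2.fderiv_eq_zero
  have hfdadd : fderiv ℝ (fun θ => G θ + g θ) θ₂ = fderiv ℝ G θ₂ + fderiv ℝ g θ₂ :=
    ((hG θ₂).hasFDerivAt.add (hg θ₂).hasFDerivAt).fderiv
  have hfdG2 : fderiv ℝ G θ₂ = - fderiv ℝ g θ₂ := by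
    rw [hfdadd] at hfd2
    linear_combination (norm := module) hfd2
  have part1 : gradient G θ₂ = -gradient g θ₂ := by
    simp [gradient, hfdG2]
  -- strong monotonicity of the gradient of G
  have hFdiff : Differentiable ℝ (fun θ => G θ - lam / 2 * ‖θ‖ ^ 2) := by
    intro θ
    exact (hG θ).sub (((differentiable_id.inner ℝ differentiable_id) θ).congr_of_eventuallyEq
      (by filter_upwards with z; rw [real_inner_self_eq_norm_sq]; rfl) |>.const_mul (lam / 2))
  have hFfd : ∀ θ : E, fderiv ℝ (fun θ => G θ - lam / 2 * ‖θ‖ ^ 2) θ =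
      fderiv ℝ G θ - (lam / 2) • (2 • (innerSL ℝ θ)) := by
    intro θ
    have h2 : HasFDerivAt (fun θ : E => ‖θ‖ ^ 2) (2 • (innerSL ℝ θ)) θ := by
      simpa using (hasFDerivAt_id θ).norm_sq
    exact ((hG θ).hasFDerivAt.sub (h2.const_mul (lam / 2))).fderiv
  have hmono := my_monotone hFdiff hGsc θ₁ θ₂
  rw [hFfd θ₁, hFfd θ₂] at hmono
  simp only [ContinuousLinearMap.sub_apply, ContinuousLinearMap.smul_apply,
    innerSL_apply_apply, smul_eq_mul, nsmul_eq_mul, Nat.cast_ofNat] at hmono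
  have hinnerG1 : ⟪gradient G θ₁, θ₂ - θ₁⟫ = fderiv ℝ G θ₁ (θ₂ - θ₁) :=
    my_inner_gradient G θ₁ (θ₂ - θ₁)
  have hinnerG2 : ⟪gradient G θ₂, θ₂ - θ₁⟫ = fderiv ℝ G θ₂ (θ₂ - θ₁) :=
    my_inner_gradient G θ₂ (θ₂ - θ₁)
  have hns : ⟪θ₂ - θ₁, θ₂ - θ₁⟫ = ‖θ₁ - θ₂‖ ^ 2 := by
    rw [real_inner_self_eq_norm_sq, norm_sub_rev]
  have hsplit : ⟪θ₂, θ₂ - θ₁⟫ - ⟪θ₁, θ₂ - θ₁⟫ = ⟪θ₂ - θ₁, θ₂ - θ₁⟫ := by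
    rw [← inner_sub_left]
  have part2 : lam * ‖θ₁ - θ₂‖ ^ 2 ≤ ⟪gradient G θ₂ - gradient G θ₁, θ₂ - θ₁⟫ := by
    rw [inner_sub_left, hinnerG1, hinnerG2]
    nlinarith [hmono, hsplit, hns]
  have part3 : ⟪gradient G θ₂ - gradient G θ₁, θ₂ - θ₁⟫ = ⟪-gradient g θ₂, θ₂ - θ₁⟫ := by
    rw [hgrad1, sub_zero, part1]
  have part4 : ⟪-gradient g θ₂, θ₂ - θ₁⟫ ≤ ‖gradient g θ₂‖ * ‖θ₁ - θ₂‖ := by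
    calc ⟪-gradient g θ₂, θ₂ - θ₁⟫ ≤ ‖-gradient g θ₂‖ * ‖θ₂ - θ₁‖ := real_inner_le_norm _ _
    _ = ‖gradient g θ₂‖ * ‖θ₁ - θ₂‖ := by rw [norm_neg, norm_sub_rev]
  refine ⟨part1, part2, part3, part4, ?_⟩
  have key : lam * ‖θ₁ - θ₂‖ ^ 2 ≤ ‖gradient g θ₂‖ * ‖θ₁ - θ₂‖ := by
    calc lam * ‖θ₁ - θ₂‖ ^ 2 ≤ ⟪gradient G θ₂ - gradient G θ₁, θ₂ - θ₁⟫ := part2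
    _ = ⟪-gradient g θ₂, θ₂ - θ₁⟫ := part3
    _ ≤ ‖gradient g θ₂‖ * ‖θ₁ - θ₂‖ := part4
  exact my_div_bound hlam (norm_nonneg _) (norm_nonneg _) key
end
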